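/- For every sequence (λ_m)_{m∈ℤ} of complex numbers, the operators E_n, H_n, F_n on R satisfy, for all n, m ∈ ℤ: [H_n, H_m] = 0, [H_n, E_m] = 2 E_{n+m}, [H_n, F_m] = −2 F_{n+m}, [E_n, F_m] = H_{n+m}, [E_n, E_m] = 0, and [F_n, F_m] = 0. In other words, the assignment e⊗tⁿ ↦ E_n, h⊗tⁿ ↦ H_n, f⊗tⁿ ↦ F_n defines a representation of the loop algebra sl(2,ℂ)⊗ℂ[t,t⁻¹] on R (that is, a representation of the affine algebra with the central element acting by 0). This is the boson realization of the Verma type module M(λ) with λ(c) = 0. -/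

import Mathlib

open MvPolynomial

/-- The ring `R = ℂ[x_m : m ∈ ℤ]`. -/
abbrev RSpace : Type := MvPolynomial ℤ ℂ

/-- `F_n` : multiplication by `x_n`.  (Applied to each polynomial, all the sums
appearing below are finite, so `∑ᶠ` computes the intended operators.) -/
noncomputable def Fop (n : ℤ) : RSpace → RSpace := fun q => X n * q

/-- `H_n = −λ_n · id − 2 Σ_{m∈ℤ} x_{n+m} ∂_m`. -/
noncomputable def Hop (lam : ℤ → ℂ) (n : ℤ) : RSpace → RSpace := fun q =>
  -(lam n) • q - (2 : ℂ) • ∑ᶠ m : ℤ, X (n + m) * pderiv m q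

/-- `E_n = −Σ_{m,k∈ℤ} x_{n+m+k} ∂_m ∂_k − Σ_{m∈ℤ} λ_{n+m} ∂_m`. -/
noncomputable def Eop (lam : ℤ → ℂ) (n : ℤ) : RSpace → RSpace := fun q =>
  -(∑ᶠ mk : ℤ × ℤ, X (n + mk.1 + mk.2) * pderiv mk.1 (pderiv mk.2 q))
    - ∑ᶠ m : ℤ, lam (n + m) • pderiv m q

/-- Commutator of two operators. -/
noncomputable def opComm (A B : RSpace → RSpace) : RSpace → RSpace :=
  fun q => A (B q) - B (A q)

section infra
lemma pderiv_pderiv_comm (i j : ℤ) (f : RSpace) :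
    pderiv i (pderiv j f) = pderiv j (pderiv i f) := by
  induction f using MvPolynomial.induction_on' with
  | monomial d a =>
    rcases eq_or_ne i j with rfl | hij
    · rfl
    · simp only [pderiv_monomial]
      rw [tsub_right_comm]
      congr 1
      simp only [Finsupp.coe_tsub, Pi.sub_apply, Finsupp.single_apply,
        if_neg hij, if_neg (Ne.symm hij), tsub_zero]
      ring
  | add p q hp hq => simp [map_add, hp, hq]

lemma pderiv_X' (j c : ℤ) : pderiv j (X c : RSpace) = if c = j then 1 else 0 := by
  rw [pderiv_X, Pi.single_apply]

lemma pderiv_X_mul (j m : ℤ) (q : RSpace) :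
    pderiv j (X m * q) = (if m = j then (1:RSpace) else 0) * q + X m * pderiv j q := by
  rw [pderiv_mul, pderiv_X']

def Gd (q : RSpace) (s : Finset ℤ) : Prop := ∀ i, pderiv i q ≠ 0 → i ∈ s

lemma gd_vars (q : RSpace) : Gd q q.vars := fun i h => by
  by_contra hi; exact h (pderiv_eq_zero_of_notMem_vars hi)

lemma Gd.zero {q s} (h : Gd q s) {i : ℤ} (hi : i ∉ s) : pderiv i q = 0 := by
  by_contra h0; exact hi (h i h0)

lemma Gd.mono {q s} (h : Gd q s) {t : Finset ℤ} (hst : s ⊆ t) : Gd q t :=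
  fun i hi => hst (h i hi)

lemma Gd.pderiv {q s} (h : Gd q s) (k : ℤ) : Gd (pderiv k q) s := by
  intro i hi
  refine h i fun h0 => hi ?_
  rw [pderiv_pderiv_comm, h0, map_zero]

lemma Gd.smul {q s} (h : Gd q s) (c : ℂ) : Gd (c • q) s := by
  intro i hi
  refine h i fun h0 => hi ?_
  rw [smul_eq_C_mul, pderiv_C_mul, h0, mul_zero]

lemma Gd.neg {q s} (h : Gd q s) : Gd (-q) s := by
  intro i hi
  refine h i fun h0 => hi ?_
  rw [map_neg, h0, neg_zero]

lemma Gd.sub {q1 q2 s} (h1 : Gd q1 s) (h2 : Gd q2 s) : Gd (q1 - q2) s := by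
  intro i hi
  by_contra his
  rw [map_sub, h1.zero his, h2.zero his, sub_zero] at hi
  exact hi rfl

lemma Gd.sum {ι : Type*} {t : Finset ι} {f : ι → RSpace} {s : Finset ℤ}
    (h : ∀ k ∈ t, Gd (f k) s) : Gd (∑ k ∈ t, f k) s := by
  intro i hi
  by_contra his
  rw [map_sum, Finset.sum_eq_zero (fun k hk => (h k hk).zero his)] at hi
  exact hi rfl

lemma Gd.Xmul {q s} (h : Gd q s) (m : ℤ) : Gd (X m * q) (insert m s) := by
  intro i hi
  by_contra his
  rw [Finset.mem_insert, not_or] at his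
  rw [pderiv_X_mul, if_neg (Ne.symm his.1), zero_mul, zero_add, h.zero his.2, mul_zero] at hi
  exact hi rfl

lemma Texp (n : ℤ) (q : RSpace) {t : Finset ℤ} (ht : Gd q t) :
    (∑ᶠ m : ℤ, X (n + m) * pderiv m q) = ∑ m ∈ t, X (n + m) * pderiv m q := by
  apply finsum_eq_finset_sum_of_support_subset
  intro j hj
  simp only [Function.mem_support] at hj
  by_contra hjt
  exact hj (by rw [ht.zero hjt, mul_zero])

lemma Lexp (lam : ℤ → ℂ) (n : ℤ) (q : RSpace) {t : Finset ℤ} (ht : Gd q t) :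
    (∑ᶠ m : ℤ, lam (n + m) • pderiv m q) = ∑ m ∈ t, lam (n + m) • pderiv m q := by
  apply finsum_eq_finset_sum_of_support_subset
  intro j hj
  simp only [Function.mem_support] at hj
  by_contra hjt
  exact hj (by rw [ht.zero hjt, smul_zero])

lemma Sexp (n : ℤ) (q : RSpace) {t : Finset ℤ} (ht : Gd q t) :
    (∑ᶠ mk : ℤ × ℤ, X (n + mk.1 + mk.2) * pderiv mk.1 (pderiv mk.2 q))
      = ∑ j ∈ t, ∑ k ∈ t, X (n + j + k) * pderiv j (pderiv k q) := by
  rw [← Finset.sum_product']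
  apply finsum_eq_finset_sum_of_support_subset
  intro p hp
  simp only [Function.mem_support] at hp
  simp only [Finset.coe_product, Set.mem_prod]
  constructor
  · by_contra h1
    exact hp (by rw [(ht.pderiv p.2).zero h1, mul_zero])
  · by_contra h2
    exact hp (by rw [ht.zero h2, map_zero, mul_zero])

lemma sum_delta {t : Finset ℤ} {c : ℤ} (hc : c ∈ t) (f : ℤ → RSpace) :
    (∑ j ∈ t, (if c = j then (1:RSpace) else 0) * f j) = f c := by
  rw [Finset.sum_congr rfl (g := fun j => if c = j then f j else 0)
    (fun j _ => by by_cases h : c = j <;> simp [h])]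
  rw [Finset.sum_ite_eq, if_pos hc]

lemma sum_shrink {s t : Finset ℤ} (hst : s ⊆ t) {f : ℤ → RSpace}
    (h0 : ∀ j ∈ t, j ∉ s → f j = 0) : ∑ j ∈ t, f j = ∑ j ∈ s, f j :=
  (Finset.sum_subset hst fun x hx hxs => h0 x hx hxs).symm
end infra

lemma rel_FF (n m : ℤ) : opComm (Fop n) (Fop m) = 0 := by
  funext q
  simp only [opComm, Fop, Pi.zero_apply]
  ring

lemma rel_HF (lam : ℤ → ℂ) (n m : ℤ) :
    opComm (Hop lam n) (Fop m) = (-2 : ℂ) • Fop (n + m) := by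
  funext q
  have hs : Gd q q.vars := gd_vars q
  set s : Finset ℤ := q.vars with hs_def
  have hs' : Gd q (insert m s) := hs.mono (Finset.subset_insert m s)
  simp only [opComm, Hop, Fop, Pi.smul_apply]
  rw [Texp n q hs', Texp n (X m * q) (hs.Xmul m)]
  have expand : ∀ j ∈ insert m s, X (n+j) * pderiv j (X m * q)
      = (if m = j then (1:RSpace) else 0) * (X (n+j) * q) + X m * (X (n+j) * pderiv j q) := by
    intro j _
    rw [pderiv_X_mul]
    ring
  rw [Finset.sum_congr rfl expand, Finset.sum_add_distrib,
    sum_delta (Finset.mem_insert_self m s) (fun j => X (n+j) * q), ← Finset.mul_sum]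
  simp only [smul_eq_C_mul, map_neg]
  ring
lemma gd_Tsum {q : RSpace} {s : Finset ℤ} (hs : Gd q s) (m : ℤ) {t : Finset ℤ}
    (h1 : s ⊆ t) (h2 : ∀ k ∈ s, m + k ∈ t) :
    Gd (∑ k ∈ s, X (m + k) * pderiv k q) t := by
  refine Gd.sum fun k hk => ((hs.pderiv k).Xmul (m + k)).mono ?_
  intro x hx
  rcases Finset.mem_insert.1 hx with rfl | hx
  · exact h2 k hk
  · exact h1 hx

lemma T_of_T (n m : ℤ) (q : RSpace) {s t : Finset ℤ} (hs : Gd q s) (hst : s ⊆ t)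
    (hmt : ∀ k ∈ s, m + k ∈ t) :
    (∑ j ∈ t, X (n + j) * pderiv j (∑ k ∈ s, X (m + k) * pderiv k q))
      = (∑ k ∈ s, X (n + (m + k)) * pderiv k q)
        + ∑ j ∈ s, ∑ k ∈ s, X (n + j) * X (m + k) * pderiv j (pderiv k q) := by
  have step : ∀ j ∈ t, X (n + j) * pderiv j (∑ k ∈ s, X (m + k) * pderiv k q)
      = (∑ k ∈ s, (if m + k = j then (1:RSpace) else 0) * (X (n + j) * pderiv k q))
        + ∑ k ∈ s, X (n + j) * X (m + k) * pderiv j (pderiv k q) := by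
    intro j _
    rw [map_sum, Finset.mul_sum, ← Finset.sum_add_distrib]
    refine Finset.sum_congr rfl fun k _ => ?_
    rw [pderiv_X_mul]
    ring
  rw [Finset.sum_congr rfl step, Finset.sum_add_distrib]
  congr 1
  · rw [Finset.sum_comm]
    refine Finset.sum_congr rfl fun k hk => ?_
    exact sum_delta (hmt k hk) (fun j => X (n + j) * pderiv k q)
  · refine sum_shrink hst fun j _ hj => Finset.sum_eq_zero fun k _ => ?_
    rw [pderiv_pderiv_comm, hs.zero hj, map_zero, mul_zero]

lemma rel_HH (lam : ℤ → ℂ) (n m : ℤ) : opComm (Hop lam n) (Hop lam m) = 0 := by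
  funext q
  have hs : Gd q q.vars := gd_vars q
  set s : Finset ℤ := q.vars with hs_def
  set t : Finset ℤ := s ∪ s.image (n + ·) ∪ s.image (m + ·) with ht_def
  have h1 : s ⊆ t := by
    intro x hx
    simp only [ht_def, Finset.mem_union]
    exact Or.inl (Or.inl hx)
  have h2n : ∀ k ∈ s, n + k ∈ t := by
    intro k hk
    simp only [ht_def, Finset.mem_union, Finset.mem_image]
    exact Or.inl (Or.inr ⟨k, hk, rfl⟩)
  have h2m : ∀ k ∈ s, m + k ∈ t := by
    intro k hk
    simp only [ht_def, Finset.mem_union, Finset.mem_image]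
    exact Or.inr ⟨k, hk, rfl⟩
  -- abbreviations
  set Bn : RSpace := ∑ k ∈ s, X (n + k) * pderiv k q with hBn
  set Bm : RSpace := ∑ k ∈ s, X (m + k) * pderiv k q with hBm
  have hQn : Hop lam n q = C (-lam n) * q - C 2 * Bn := by
    rw [Hop, Texp n q hs, ← hBn, smul_eq_C_mul, smul_eq_C_mul, map_neg]
    all_goals ring
  have hQm : Hop lam m q = C (-lam m) * q - C 2 * Bm := by
    rw [Hop, Texp m q hs, ← hBm, smul_eq_C_mul, smul_eq_C_mul, map_neg]
    all_goals ring
  have hGBn : Gd Bn t := gd_Tsum hs n h1 h2n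
  have hGBm : Gd Bm t := gd_Tsum hs m h1 h2m
  have hGQn : Gd (Hop lam n q) t := by
    rw [hQn, smul_eq_C_mul (p := q) (-lam n) |>.symm, smul_eq_C_mul (p := Bn) 2 |>.symm]
    exact ((hs.mono h1).smul _).sub (hGBn.smul _)
  have hGQm : Gd (Hop lam m q) t := by
    rw [hQm, smul_eq_C_mul (p := q) (-lam m) |>.symm, smul_eq_C_mul (p := Bm) 2 |>.symm]
    exact ((hs.mono h1).smul _).sub (hGBm.smul _)
  -- the key composite sums
  have key : ∀ a b : ℤ, ∀ (hGQ : Gd (Hop lam b q) t) (hB : ∀ k ∈ s, b + k ∈ t)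
      (hQ : Hop lam b q = C (-lam b) * q - C 2 * (∑ k ∈ s, X (b + k) * pderiv k q)),
      (∑ j ∈ t, X (a + j) * pderiv j (Hop lam b q))
        = C (-lam b) * (∑ j ∈ s, X (a + j) * pderiv j q)
          - C 2 * ((∑ k ∈ s, X (a + (b + k)) * pderiv k q)
            + ∑ j ∈ s, ∑ k ∈ s, X (a + j) * X (b + k) * pderiv j (pderiv k q)) := by
    intro a b hGQ hB hQ
    have expand : ∀ j ∈ t, X (a + j) * pderiv j (Hop lam b q)
        = C (-lam b) * (X (a + j) * pderiv j q)
          - C 2 * (X (a + j) * pderiv j (∑ k ∈ s, X (b + k) * pderiv k q)) := by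
      intro j _
      rw [hQ, map_sub, pderiv_C_mul, pderiv_C_mul]
      ring
    rw [Finset.sum_congr rfl expand, Finset.sum_sub_distrib, ← Finset.mul_sum, ← Finset.mul_sum,
      T_of_T a b q hs h1 hB,
      sum_shrink h1 (fun j _ hj => by rw [hs.zero hj, mul_zero])]
  have keyNM := key n m hGQm h2m hQm
  have keyMN := key m n hGQn h2n hQn
  -- symmetric identities
  have symT : (∑ k ∈ s, X (n + (m + k)) * pderiv k q)
      = ∑ k ∈ s, X (m + (n + k)) * pderiv k q := by
    refine Finset.sum_congr rfl fun k _ => ?_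
    rw [show n + (m + k) = m + (n + k) by ring]
  have symC : (∑ j ∈ s, ∑ k ∈ s, X (n + j) * X (m + k) * pderiv j (pderiv k q))
      = ∑ j ∈ s, ∑ k ∈ s, X (m + j) * X (n + k) * pderiv j (pderiv k q) := by
    rw [Finset.sum_comm]
    refine Finset.sum_congr rfl fun j _ => Finset.sum_congr rfl fun k _ => ?_
    rw [pderiv_pderiv_comm]
    ring
  -- assemble
  simp only [opComm, Pi.zero_apply]
  rw [show Hop lam n (Hop lam m q)
      = C (-lam n) * (Hop lam m q) - C 2 * ∑ j ∈ t, X (n + j) * pderiv j (Hop lam m q) by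
    rw [Hop, Texp n _ hGQm, smul_eq_C_mul, smul_eq_C_mul, map_neg]; all_goals ring]
  rw [show Hop lam m (Hop lam n q)
      = C (-lam m) * (Hop lam n q) - C 2 * ∑ j ∈ t, X (m + j) * pderiv j (Hop lam n q) by
    rw [Hop, Texp m _ hGQn, smul_eq_C_mul, smul_eq_C_mul, map_neg]; all_goals ring]
  rw [keyNM, keyMN, hQn, hQm, symT, symC]
  ring
lemma pderiv_delta_mul (j : ℤ) (c : Prop) [Decidable c] (q : RSpace) :
    pderiv j ((if c then (1:RSpace) else 0) * q) = (if c then 1 else 0) * pderiv j q := by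
  split <;> simp

lemma Gd.Cmul {q s} (h : Gd q s) (a : ℂ) : Gd (C a * q) s := by
  intro i hi
  refine h i fun h0 => hi ?_
  rw [pderiv_C_mul, h0, mul_zero]

/-- Expansion of `Eop` over a carrier finset, with `C`-multiplication instead of `•`. -/
lemma Eexp (lam : ℤ → ℂ) (m : ℤ) (p : RSpace) {t : Finset ℤ} (ht : Gd p t) :
    Eop lam m p = -(∑ a ∈ t, ∑ b ∈ t, X (m + a + b) * pderiv a (pderiv b p))
      - ∑ c ∈ t, C (lam (m + c)) * pderiv c p := by
  rw [Eop, Sexp m p ht, Lexp lam m p ht]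
  congr 1
  exact Finset.sum_congr rfl fun c _ => smul_eq_C_mul _ _

lemma rel_EF (lam : ℤ → ℂ) (n m : ℤ) :
    opComm (Eop lam n) (Fop m) = Hop lam (n + m) := by
  funext q
  have hs : Gd q q.vars := gd_vars q
  set s : Finset ℤ := q.vars with hs_def
  set t : Finset ℤ := insert m s with ht_def
  have hst : s ⊆ t := Finset.subset_insert m s
  have hmt : m ∈ t := Finset.mem_insert_self m s
  have hXq : Gd (X m * q) t := hs.Xmul m
  have hqt : Gd q t := hs.mono hst
  simp only [opComm, Fop]
  rw [Eexp lam n (X m * q) hXq, Eexp lam n q hqt]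
  -- expand the S-part of `Eop lam n (X m * q)`
  have expS : ∀ a ∈ t, ∀ b ∈ t, X (n + a + b) * pderiv a (pderiv b (X m * q))
      = (if m = b then (1:RSpace) else 0) * (X (n + a + b) * pderiv a q)
        + ((if m = a then (1:RSpace) else 0) * (X (n + a + b) * pderiv b q)
          + X m * (X (n + a + b) * pderiv a (pderiv b q))) := by
    intro a _ b _
    rw [pderiv_X_mul b m q, map_add, pderiv_delta_mul, pderiv_X_mul a m (pderiv b q)]
    ring
  have hSsplit : (∑ a ∈ t, ∑ b ∈ t, X (n + a + b) * pderiv a (pderiv b (X m * q)))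
      = (∑ a ∈ s, X (n + a + m) * pderiv a q)
        + ((∑ b ∈ s, X (n + m + b) * pderiv b q)
          + X m * ∑ a ∈ t, ∑ b ∈ t, X (n + a + b) * pderiv a (pderiv b q)) := by
    rw [Finset.sum_congr rfl (fun a ha => Finset.sum_congr rfl (expS a ha))]
    simp only [Finset.sum_add_distrib]
    congr 1
    · rw [sum_shrink hst (fun a _ ha => by simp [hs.zero ha])]
      refine Finset.sum_congr rfl fun a _ => ?_
      exact sum_delta hmt (fun b => X (n + a + b) * pderiv a q)
    congr 1
    · rw [Finset.sum_comm,
        sum_shrink hst (fun b _ hb => by simp [hs.zero hb])]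
      refine Finset.sum_congr rfl fun b _ => ?_
      exact sum_delta hmt (fun a => X (n + a + b) * pderiv b q)
    · rw [Finset.mul_sum]
      refine Finset.sum_congr rfl fun a _ => ?_
      rw [Finset.mul_sum]
  -- expand the L-part of `Eop lam n (X m * q)`
  have expL : ∀ c ∈ t, C (lam (n + c)) * pderiv c (X m * q)
      = (if m = c then (1:RSpace) else 0) * (C (lam (n + c)) * q)
        + X m * (C (lam (n + c)) * pderiv c q) := by
    intro c _
    rw [pderiv_X_mul]
    ring
  have hLsplit : (∑ c ∈ t, C (lam (n + c)) * pderiv c (X m * q))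
      = C (lam (n + m)) * q + X m * ∑ c ∈ t, C (lam (n + c)) * pderiv c q := by
    rw [Finset.sum_congr rfl expL, Finset.sum_add_distrib,
      sum_delta hmt (fun c => C (lam (n + c)) * q), Finset.mul_sum]
  rw [hSsplit, hLsplit]
  -- RHS
  rw [Hop, Texp (n + m) q hs, smul_eq_C_mul, smul_eq_C_mul, map_neg]
  have e1 : (∑ a ∈ s, X (n + a + m) * pderiv a q) = ∑ a ∈ s, X (n + m + a) * pderiv a q :=
    Finset.sum_congr rfl fun a _ => by rw [show n + a + m = n + m + a by ring]
  rw [e1, map_ofNat (C : ℂ →+* RSpace) 2]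
  ring
lemma pderiv_comm_d2 (j a b : ℤ) (q : RSpace) :
    pderiv j (pderiv a (pderiv b q)) = pderiv a (pderiv b (pderiv j q)) := by
  rw [pderiv_pderiv_comm j a, pderiv_pderiv_comm j b]

lemma pderiv_d2_d2 (a b u v : ℤ) (q : RSpace) :
    pderiv a (pderiv b (pderiv u (pderiv v q)))
      = pderiv u (pderiv v (pderiv a (pderiv b q))) := by
  rw [pderiv_comm_d2 b u v q, pderiv_comm_d2 a u v (pderiv b q)]

lemma sum_shrink2 {s t : Finset ℤ} (hst : s ⊆ t) {f : ℤ → ℤ → RSpace}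
    (h0 : ∀ j k, (j ∉ s ∨ k ∉ s) → f j k = 0) :
    (∑ j ∈ t, ∑ k ∈ t, f j k) = ∑ j ∈ s, ∑ k ∈ s, f j k := by
  rw [sum_shrink hst (fun j _ hj => Finset.sum_eq_zero fun k _ => h0 j k (Or.inl hj))]
  exact Finset.sum_congr rfl fun j _ =>
    sum_shrink hst (fun k _ hk => h0 j k (Or.inr hk))

lemma gd_Ssum {q : RSpace} {s : Finset ℤ} (hs : Gd q s) (m : ℤ) {t : Finset ℤ}
    (h1 : s ⊆ t) (h2 : ∀ a ∈ s, ∀ b ∈ s, m + a + b ∈ t) :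
    Gd (∑ a ∈ s, ∑ b ∈ s, X (m + a + b) * pderiv a (pderiv b q)) t := by
  refine Gd.sum fun a ha => Gd.sum fun b hb => (((hs.pderiv b).pderiv a).Xmul (m+a+b)).mono ?_
  intro x hx
  rcases Finset.mem_insert.1 hx with rfl | hx
  · exact h2 a ha b hb
  · exact h1 hx

lemma gd_Lsum {q : RSpace} {s : Finset ℤ} (hs : Gd q s) (f : ℤ → ℂ) {t : Finset ℤ}
    (h1 : s ⊆ t) : Gd (∑ c ∈ s, C (f c) * pderiv c q) t :=
  Gd.sum fun c _ => ((hs.pderiv c).Cmul (f c)).mono h1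

lemma T_of_S (n m : ℤ) (q : RSpace) {s t : Finset ℤ} (hs : Gd q s) (hst : s ⊆ t)
    (hm : ∀ a ∈ s, ∀ b ∈ s, m + a + b ∈ t) :
    (∑ j ∈ t, X (n + j) * pderiv j (∑ a ∈ s, ∑ b ∈ s, X (m + a + b) * pderiv a (pderiv b q)))
      = (∑ a ∈ s, ∑ b ∈ s, X (n + (m + a + b)) * pderiv a (pderiv b q))
        + ∑ j ∈ s, ∑ a ∈ s, ∑ b ∈ s,
            X (n + j) * X (m + a + b) * pderiv j (pderiv a (pderiv b q)) := by
  have step : ∀ j ∈ t,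
      X (n + j) * pderiv j (∑ a ∈ s, ∑ b ∈ s, X (m + a + b) * pderiv a (pderiv b q))
      = (∑ a ∈ s, ∑ b ∈ s,
          (if m + a + b = j then (1:RSpace) else 0) * (X (n + j) * pderiv a (pderiv b q)))
        + ∑ a ∈ s, ∑ b ∈ s, X (n + j) * X (m + a + b) * pderiv j (pderiv a (pderiv b q)) := by
    intro j _
    simp only [map_sum]
    rw [Finset.mul_sum, ← Finset.sum_add_distrib]
    refine Finset.sum_congr rfl fun a _ => ?_
    rw [Finset.mul_sum, ← Finset.sum_add_distrib]
    refine Finset.sum_congr rfl fun b _ => ?_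
    rw [pderiv_X_mul]
    ring
  rw [Finset.sum_congr rfl step, Finset.sum_add_distrib]
  congr 1
  · rw [Finset.sum_comm]
    refine Finset.sum_congr rfl fun a ha => ?_
    rw [Finset.sum_comm]
    refine Finset.sum_congr rfl fun b hb => ?_
    exact sum_delta (hm a ha b hb) (fun j => X (n + j) * pderiv a (pderiv b q))
  · refine sum_shrink hst fun j _ hj => Finset.sum_eq_zero fun a _ =>
      Finset.sum_eq_zero fun b _ => ?_
    rw [pderiv_comm_d2, hs.zero hj]; simp

lemma T_of_L (lam : ℤ → ℂ) (n m : ℤ) (q : RSpace) {s t : Finset ℤ} (hs : Gd q s)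
    (hst : s ⊆ t) :
    (∑ j ∈ t, X (n + j) * pderiv j (∑ c ∈ s, C (lam (m + c)) * pderiv c q))
      = ∑ j ∈ s, ∑ c ∈ s, C (lam (m + c)) * (X (n + j) * pderiv j (pderiv c q)) := by
  have step : ∀ j ∈ t, X (n + j) * pderiv j (∑ c ∈ s, C (lam (m + c)) * pderiv c q)
      = ∑ c ∈ s, C (lam (m + c)) * (X (n + j) * pderiv j (pderiv c q)) := by
    intro j _
    simp only [map_sum, pderiv_C_mul]
    rw [Finset.mul_sum]
    exact Finset.sum_congr rfl fun c _ => by ring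
  rw [Finset.sum_congr rfl step]
  refine sum_shrink hst fun j _ hj => Finset.sum_eq_zero fun c _ => ?_
  rw [pderiv_pderiv_comm, hs.zero hj]; simp

lemma S_of_T (m n : ℤ) (q : RSpace) {s t : Finset ℤ} (hs : Gd q s) (hst : s ⊆ t)
    (hn : ∀ k ∈ s, n + k ∈ t) :
    (∑ a ∈ t, ∑ b ∈ t, X (m + a + b) * pderiv a (pderiv b (∑ k ∈ s, X (n + k) * pderiv k q)))
      = (∑ a ∈ s, ∑ c ∈ s, X (m + a + (n + c)) * pderiv a (pderiv c q))
        + ((∑ b ∈ s, ∑ c ∈ s, X (m + (n + c) + b) * pderiv b (pderiv c q))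
          + ∑ a ∈ s, ∑ b ∈ s, ∑ c ∈ s,
              X (m + a + b) * X (n + c) * pderiv a (pderiv b (pderiv c q))) := by
  have step : ∀ a ∈ t, ∀ b ∈ t,
      X (m + a + b) * pderiv a (pderiv b (∑ k ∈ s, X (n + k) * pderiv k q))
      = (∑ c ∈ s, (if n + c = b then (1:RSpace) else 0) * (X (m + a + b) * pderiv a (pderiv c q)))
        + ((∑ c ∈ s, (if n + c = a then (1:RSpace) else 0) * (X (m + a + b) * pderiv b (pderiv c q)))
          + ∑ c ∈ s, X (m + a + b) * X (n + c) * pderiv a (pderiv b (pderiv c q))) := by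
    intro a _ b _
    rw [map_sum, Finset.sum_congr rfl (fun k _ => pderiv_X_mul b (n + k) (pderiv k q)),
      map_sum]
    rw [Finset.sum_congr rfl
      (fun k _ => by rw [map_add, pderiv_delta_mul, pderiv_X_mul a (n + k)])]
    rw [Finset.mul_sum, ← Finset.sum_add_distrib, ← Finset.sum_add_distrib]
    refine Finset.sum_congr rfl fun c _ => ?_
    ring
  rw [Finset.sum_congr rfl (fun a ha => Finset.sum_congr rfl (step a ha))]
  simp only [Finset.sum_add_distrib]
  congr 1
  · -- delta on b
    rw [sum_shrink hst (fun a _ ha => Finset.sum_eq_zero fun b _ =>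
      Finset.sum_eq_zero fun c _ => by
        rw [pderiv_pderiv_comm, hs.zero ha]; simp)]
    refine Finset.sum_congr rfl fun a _ => ?_
    rw [Finset.sum_comm]
    refine Finset.sum_congr rfl fun c hc => ?_
    exact sum_delta (hn c hc) (fun b => X (m + a + b) * pderiv a (pderiv c q))
  congr 1
  · -- delta on a
    rw [Finset.sum_comm]
    rw [sum_shrink hst (fun b _ hb => Finset.sum_eq_zero fun a _ =>
      Finset.sum_eq_zero fun c _ => by
        rw [pderiv_pderiv_comm, hs.zero hb]; simp)]
    refine Finset.sum_congr rfl fun b _ => ?_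
    rw [Finset.sum_comm]
    refine Finset.sum_congr rfl fun c hc => ?_
    exact sum_delta (hn c hc) (fun a => X (m + a + b) * pderiv b (pderiv c q))
  · -- cross term, shrink both a and b
    rw [sum_shrink hst (fun a _ ha => Finset.sum_eq_zero fun b _ =>
      Finset.sum_eq_zero fun c _ => by
        rw [pderiv_comm_d2, hs.zero ha]; simp)]
    refine Finset.sum_congr rfl fun a _ => ?_
    refine sum_shrink hst fun b _ hb => Finset.sum_eq_zero fun c _ => ?_
    rw [pderiv_pderiv_comm b c, hs.zero hb]; simp

lemma L_of_T (lam : ℤ → ℂ) (m n : ℤ) (q : RSpace) {s t : Finset ℤ} (hs : Gd q s)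
    (hst : s ⊆ t) (hn : ∀ k ∈ s, n + k ∈ t) :
    (∑ j ∈ t, C (lam (m + j)) * pderiv j (∑ k ∈ s, X (n + k) * pderiv k q))
      = (∑ c ∈ s, C (lam (m + (n + c))) * pderiv c q)
        + ∑ j ∈ s, ∑ c ∈ s, C (lam (m + j)) * (X (n + c) * pderiv j (pderiv c q)) := by
  have step : ∀ j ∈ t, C (lam (m + j)) * pderiv j (∑ k ∈ s, X (n + k) * pderiv k q)
      = (∑ c ∈ s, (if n + c = j then (1:RSpace) else 0) * (C (lam (m + j)) * pderiv c q))
        + ∑ c ∈ s, C (lam (m + j)) * (X (n + c) * pderiv j (pderiv c q)) := by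
    intro j _
    rw [map_sum, Finset.sum_congr rfl (fun k _ => pderiv_X_mul j (n + k) (pderiv k q)),
      Finset.mul_sum, ← Finset.sum_add_distrib]
    refine Finset.sum_congr rfl fun c _ => ?_
    ring
  rw [Finset.sum_congr rfl step, Finset.sum_add_distrib]
  congr 1
  · rw [Finset.sum_comm]
    refine Finset.sum_congr rfl fun c hc => ?_
    exact sum_delta (hn c hc) (fun j => C (lam (m + j)) * pderiv c q)
  · refine sum_shrink hst fun j _ hj => Finset.sum_eq_zero fun c _ => ?_
    rw [pderiv_pderiv_comm, hs.zero hj]; simp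

lemma L_of_L (lam : ℤ → ℂ) (n m : ℤ) (q : RSpace) {s t : Finset ℤ} (hs : Gd q s)
    (hst : s ⊆ t) :
    (∑ j ∈ t, C (lam (n + j)) * pderiv j (∑ c ∈ s, C (lam (m + c)) * pderiv c q))
      = ∑ j ∈ s, ∑ c ∈ s, C (lam (n + j)) * C (lam (m + c)) * pderiv j (pderiv c q) := by
  have step : ∀ j ∈ t, C (lam (n + j)) * pderiv j (∑ c ∈ s, C (lam (m + c)) * pderiv c q)
      = ∑ c ∈ s, C (lam (n + j)) * C (lam (m + c)) * pderiv j (pderiv c q) := by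
    intro j _
    simp only [map_sum, pderiv_C_mul]
    rw [Finset.mul_sum]
    exact Finset.sum_congr rfl fun c _ => by ring
  rw [Finset.sum_congr rfl step]
  refine sum_shrink hst fun j _ hj => Finset.sum_eq_zero fun c _ => ?_
  rw [pderiv_pderiv_comm, hs.zero hj]; simp

lemma L_of_S (lam : ℤ → ℂ) (n m : ℤ) (q : RSpace) {s t : Finset ℤ} (hs : Gd q s)
    (hst : s ⊆ t) (hm : ∀ a ∈ s, ∀ b ∈ s, m + a + b ∈ t) :
    (∑ j ∈ t, C (lam (n + j)) * pderiv j (∑ a ∈ s, ∑ b ∈ s, X (m + a + b) * pderiv a (pderiv b q)))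
      = (∑ a ∈ s, ∑ b ∈ s, C (lam (n + (m + a + b))) * pderiv a (pderiv b q))
        + ∑ j ∈ s, ∑ a ∈ s, ∑ b ∈ s,
            C (lam (n + j)) * X (m + a + b) * pderiv j (pderiv a (pderiv b q)) := by
  have step : ∀ j ∈ t,
      C (lam (n + j)) * pderiv j (∑ a ∈ s, ∑ b ∈ s, X (m + a + b) * pderiv a (pderiv b q))
      = (∑ a ∈ s, ∑ b ∈ s,
          (if m + a + b = j then (1:RSpace) else 0) * (C (lam (n + j)) * pderiv a (pderiv b q)))
        + ∑ a ∈ s, ∑ b ∈ s, C (lam (n + j)) * X (m + a + b) * pderiv j (pderiv a (pderiv b q)) := by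
    intro j _
    simp only [map_sum]
    rw [Finset.mul_sum, ← Finset.sum_add_distrib]
    refine Finset.sum_congr rfl fun a _ => ?_
    rw [Finset.mul_sum, ← Finset.sum_add_distrib]
    refine Finset.sum_congr rfl fun b _ => ?_
    rw [pderiv_X_mul]
    ring
  rw [Finset.sum_congr rfl step, Finset.sum_add_distrib]
  congr 1
  · rw [Finset.sum_comm]
    refine Finset.sum_congr rfl fun a ha => ?_
    rw [Finset.sum_comm]
    refine Finset.sum_congr rfl fun b hb => ?_
    exact sum_delta (hm a ha b hb) (fun j => C (lam (n + j)) * pderiv a (pderiv b q))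
  · refine sum_shrink hst fun j _ hj => Finset.sum_eq_zero fun a _ =>
      Finset.sum_eq_zero fun b _ => ?_
    rw [pderiv_comm_d2, hs.zero hj]; simp

lemma S_of_L (lam : ℤ → ℂ) (n m : ℤ) (q : RSpace) {s t : Finset ℤ} (hs : Gd q s)
    (hst : s ⊆ t) :
    (∑ a ∈ t, ∑ b ∈ t, X (n + a + b) * pderiv a (pderiv b (∑ c ∈ s, C (lam (m + c)) * pderiv c q)))
      = ∑ a ∈ s, ∑ b ∈ s, ∑ c ∈ s,
          C (lam (m + c)) * (X (n + a + b) * pderiv a (pderiv b (pderiv c q))) := by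
  have step : ∀ a ∈ t, ∀ b ∈ t,
      X (n + a + b) * pderiv a (pderiv b (∑ c ∈ s, C (lam (m + c)) * pderiv c q))
      = ∑ c ∈ s, C (lam (m + c)) * (X (n + a + b) * pderiv a (pderiv b (pderiv c q))) := by
    intro a _ b _
    simp only [map_sum, pderiv_C_mul]
    rw [Finset.mul_sum]
    exact Finset.sum_congr rfl fun c _ => by ring
  rw [Finset.sum_congr rfl (fun a ha => Finset.sum_congr rfl (step a ha))]
  refine sum_shrink2 hst fun a b h => Finset.sum_eq_zero fun c _ => ?_
  rcases h with ha | hb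
  · rw [pderiv_comm_d2, hs.zero ha]; simp
  · rw [pderiv_pderiv_comm b c, hs.zero hb]; simp

set_option maxHeartbeats 800000 in
lemma S_of_S (n m : ℤ) (q : RSpace) {s t : Finset ℤ} (hs : Gd q s) (hst : s ⊆ t)
    (hm : ∀ a ∈ s, ∀ b ∈ s, m + a + b ∈ t) :
    (∑ a ∈ t, ∑ b ∈ t, X (n + a + b) * pderiv a (pderiv b
        (∑ u ∈ s, ∑ v ∈ s, X (m + u + v) * pderiv u (pderiv v q))))
      = (∑ a ∈ s, ∑ u ∈ s, ∑ v ∈ s, X (n + a + (m + u + v)) * pderiv a (pderiv u (pderiv v q)))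
        + ((∑ b ∈ s, ∑ u ∈ s, ∑ v ∈ s, X (n + (m + u + v) + b) * pderiv b (pderiv u (pderiv v q)))
          + ∑ a ∈ s, ∑ b ∈ s, ∑ u ∈ s, ∑ v ∈ s,
              X (n + a + b) * X (m + u + v) * pderiv a (pderiv b (pderiv u (pderiv v q)))) := by
  have step : ∀ a ∈ t, ∀ b ∈ t,
      X (n + a + b) * pderiv a (pderiv b
        (∑ u ∈ s, ∑ v ∈ s, X (m + u + v) * pderiv u (pderiv v q)))
      = ∑ u ∈ s, ∑ v ∈ s, ((if m + u + v = b then (1:RSpace) else 0)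
            * (X (n + a + b) * pderiv a (pderiv u (pderiv v q)))
        + ((if m + u + v = a then (1:RSpace) else 0)
            * (X (n + a + b) * pderiv b (pderiv u (pderiv v q)))
          + X (n + a + b) * X (m + u + v) * pderiv a (pderiv b (pderiv u (pderiv v q))))) := by
    intro a _ b _
    simp only [map_sum]
    rw [Finset.sum_congr rfl (fun u _ => Finset.sum_congr rfl (fun v _ => by
      rw [pderiv_X_mul b (m + u + v), map_add, pderiv_delta_mul,
        pderiv_X_mul a (m + u + v)]))]
    rw [Finset.mul_sum]
    refine Finset.sum_congr rfl fun u _ => ?_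
    rw [Finset.mul_sum]
    refine Finset.sum_congr rfl fun v _ => ?_
    ring
  rw [Finset.sum_congr rfl (fun a ha => Finset.sum_congr rfl (step a ha))]
  simp only [Finset.sum_add_distrib]
  congr 1
  · -- delta on b
    rw [sum_shrink hst (fun a _ ha => Finset.sum_eq_zero fun b _ =>
      Finset.sum_eq_zero fun u _ => Finset.sum_eq_zero fun v _ => by
        rw [pderiv_comm_d2, hs.zero ha]; simp)]
    refine Finset.sum_congr rfl fun a _ => ?_
    rw [Finset.sum_comm]
    refine Finset.sum_congr rfl fun u hu => ?_
    rw [Finset.sum_comm]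
    refine Finset.sum_congr rfl fun v hv => ?_
    exact sum_delta (hm u hu v hv) (fun b => X (n + a + b) * pderiv a (pderiv u (pderiv v q)))
  congr 1
  · -- delta on a
    rw [Finset.sum_comm]
    rw [sum_shrink hst (fun b _ hb => Finset.sum_eq_zero fun a _ =>
      Finset.sum_eq_zero fun u _ => Finset.sum_eq_zero fun v _ => by
        rw [pderiv_comm_d2, hs.zero hb]; simp)]
    refine Finset.sum_congr rfl fun b _ => ?_
    rw [Finset.sum_comm]
    refine Finset.sum_congr rfl fun u hu => ?_
    rw [Finset.sum_comm]
    refine Finset.sum_congr rfl fun v hv => ?_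
    exact sum_delta (hm u hu v hv) (fun a => X (n + a + b) * pderiv b (pderiv u (pderiv v q)))
  · -- cross, shrink both
    rw [sum_shrink hst (fun a _ ha => Finset.sum_eq_zero fun b _ =>
      Finset.sum_eq_zero fun u _ => Finset.sum_eq_zero fun v _ => by
        rw [pderiv_comm_d2 a b u (pderiv v q), pderiv_pderiv_comm a v q, hs.zero ha]; simp)]
    refine Finset.sum_congr rfl fun a _ => ?_
    refine sum_shrink hst fun b _ hb => Finset.sum_eq_zero fun u _ =>
      Finset.sum_eq_zero fun v _ => ?_
    rw [pderiv_comm_d2 b u v q, hs.zero hb]; simp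
lemma rel_HE (lam : ℤ → ℂ) (n m : ℤ) :
    opComm (Hop lam n) (Eop lam m) = (2 : ℂ) • Eop lam (n + m) := by
  funext q
  have hs : Gd q q.vars := gd_vars q
  set s : Finset ℤ := q.vars with hs_def
  set t : Finset ℤ := s ∪ s.image (n + ·) ∪ (s ×ˢ s).image (fun p => m + p.1 + p.2)
    with ht_def
  have h1 : s ⊆ t := by
    intro x hx
    simp only [ht_def, Finset.mem_union]
    exact Or.inl (Or.inl hx)
  have h2n : ∀ k ∈ s, n + k ∈ t := by
    intro k hk
    simp only [ht_def, Finset.mem_union, Finset.mem_image]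
    exact Or.inl (Or.inr ⟨k, hk, rfl⟩)
  have h2m : ∀ a ∈ s, ∀ b ∈ s, m + a + b ∈ t := by
    intro a ha b hb
    simp only [ht_def, Finset.mem_union, Finset.mem_image]
    exact Or.inr ⟨(a, b), Finset.mem_product.2 ⟨ha, hb⟩, rfl⟩
  have hEm : Eop lam m q
      = -(∑ a ∈ s, ∑ b ∈ s, X (m + a + b) * pderiv a (pderiv b q))
        - ∑ c ∈ s, C (lam (m + c)) * pderiv c q := Eexp lam m q hs
  have hGE : Gd (Eop lam m q) t := by
    rw [hEm]
    exact ((gd_Ssum hs m h1 h2m).neg).sub (gd_Lsum hs _ h1)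
  have hQn : Hop lam n q = C (-lam n) * q - C 2 * ∑ k ∈ s, X (n + k) * pderiv k q := by
    rw [Hop, Texp n q hs, smul_eq_C_mul, smul_eq_C_mul, map_neg]
    all_goals ring
  have hGQn : Gd (Hop lam n q) t := by
    rw [hQn]
    exact ((hs.mono h1).Cmul _).sub ((gd_Tsum hs n h1 h2n).Cmul _)
  -- LHS first composite : Hop n (Eop m q)
  have c1 : Hop lam n (Eop lam m q)
      = C (-lam n) * (Eop lam m q)
        - C 2 * ∑ j ∈ t, X (n + j) * pderiv j (Eop lam m q) := by
    rw [Hop, Texp n _ hGE, smul_eq_C_mul, smul_eq_C_mul, map_neg]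
    all_goals ring
  have hsplit1 : (∑ j ∈ t, X (n + j) * pderiv j (Eop lam m q))
      = -(∑ j ∈ t, X (n + j) * pderiv j
            (∑ a ∈ s, ∑ b ∈ s, X (m + a + b) * pderiv a (pderiv b q)))
        - ∑ j ∈ t, X (n + j) * pderiv j (∑ c ∈ s, C (lam (m + c)) * pderiv c q) := by
    rw [← Finset.sum_neg_distrib, ← Finset.sum_sub_distrib]
    refine Finset.sum_congr rfl fun j _ => ?_
    rw [hEm, map_sub, map_neg]
    ring
  -- second composite : Eop m (Hop n q)
  have c2 : Eop lam m (Hop lam n q)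
      = -(∑ a ∈ t, ∑ b ∈ t, X (m + a + b) * pderiv a (pderiv b (Hop lam n q)))
        - ∑ j ∈ t, C (lam (m + j)) * pderiv j (Hop lam n q) := Eexp lam m _ hGQn
  have hS2 : (∑ a ∈ t, ∑ b ∈ t, X (m + a + b) * pderiv a (pderiv b (Hop lam n q)))
      = C (-lam n) * (∑ a ∈ s, ∑ b ∈ s, X (m + a + b) * pderiv a (pderiv b q))
        - C 2 * ∑ a ∈ t, ∑ b ∈ t, X (m + a + b)
            * pderiv a (pderiv b (∑ k ∈ s, X (n + k) * pderiv k q)) := by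
    have step : ∀ a ∈ t, ∀ b ∈ t,
        X (m + a + b) * pderiv a (pderiv b (Hop lam n q))
          = C (-lam n) * (X (m + a + b) * pderiv a (pderiv b q))
            - C 2 * (X (m + a + b)
                * pderiv a (pderiv b (∑ k ∈ s, X (n + k) * pderiv k q))) := by
      intro a _ b _
      rw [hQn]
      simp only [map_sub, pderiv_C_mul]
      ring
    rw [Finset.sum_congr rfl (fun a ha => Finset.sum_congr rfl (step a ha))]
    rw [Finset.sum_congr rfl (fun a _ => Finset.sum_sub_distrib _ _), Finset.sum_sub_distrib]
    congr 1
    · rw [sum_shrink2 h1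
        (f := fun a b => C (-lam n) * (X (m + a + b) * pderiv a (pderiv b q)))
        (fun a b h => by
          rcases h with ha | hb
          · simp [pderiv_pderiv_comm a b q, hs.zero ha]
          · simp [hs.zero hb])]
      simp only [Finset.mul_sum]
    · simp only [Finset.mul_sum]
  have hL2 : (∑ j ∈ t, C (lam (m + j)) * pderiv j (Hop lam n q))
      = C (-lam n) * (∑ c ∈ s, C (lam (m + c)) * pderiv c q)
        - C 2 * ∑ j ∈ t, C (lam (m + j))
            * pderiv j (∑ k ∈ s, X (n + k) * pderiv k q) := by
    have step : ∀ j ∈ t,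
        C (lam (m + j)) * pderiv j (Hop lam n q)
          = C (-lam n) * (C (lam (m + j)) * pderiv j q)
            - C 2 * (C (lam (m + j)) * pderiv j (∑ k ∈ s, X (n + k) * pderiv k q)) := by
      intro j _
      rw [hQn]
      simp only [map_sub, pderiv_C_mul]
      ring
    rw [Finset.sum_congr rfl step]
    rw [Finset.sum_sub_distrib]
    congr 1
    · rw [sum_shrink h1 (f := fun j => C (-lam n) * (C (lam (m + j)) * pderiv j q))
        (fun j _ hj => by simp [hs.zero hj])]
      simp only [Finset.mul_sum]
    · simp only [Finset.mul_sum]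
  -- expand the composite sums
  rw [opComm, c1, hsplit1, T_of_S n m q hs h1 h2m, T_of_L lam n m q hs h1, c2, hS2,
    S_of_T m n q hs h1 h2n, hL2, L_of_T lam m n q hs h1 h2n]
  -- symmetric identities
  have idA1 : (∑ a ∈ s, ∑ c ∈ s, X (m + a + (n + c)) * pderiv a (pderiv c q))
      = ∑ a ∈ s, ∑ b ∈ s, X (n + (m + a + b)) * pderiv a (pderiv b q) :=
    Finset.sum_congr rfl fun a _ => Finset.sum_congr rfl fun b _ => by
      rw [show m + a + (n + b) = n + (m + a + b) by ring]
  have idA2 : (∑ b ∈ s, ∑ c ∈ s, X (m + (n + c) + b) * pderiv b (pderiv c q))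
      = ∑ a ∈ s, ∑ b ∈ s, X (n + (m + a + b)) * pderiv a (pderiv b q) :=
    Finset.sum_congr rfl fun a _ => Finset.sum_congr rfl fun b _ => by
      rw [show m + (n + b) + a = n + (m + a + b) by ring]
  have idG3 : (∑ a ∈ s, ∑ b ∈ s, ∑ c ∈ s,
        X (m + a + b) * X (n + c) * pderiv a (pderiv b (pderiv c q)))
      = ∑ j ∈ s, ∑ a ∈ s, ∑ b ∈ s,
          X (n + j) * X (m + a + b) * pderiv j (pderiv a (pderiv b q)) := by
    rw [Finset.sum_congr rfl (fun a _ => Finset.sum_comm), Finset.sum_comm]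
    refine Finset.sum_congr rfl fun c _ => Finset.sum_congr rfl fun a _ =>
      Finset.sum_congr rfl fun b _ => ?_
    rw [← pderiv_comm_d2 c a b q]
    ring
  have idP3 : (∑ j ∈ s, ∑ c ∈ s, C (lam (m + j)) * (X (n + c) * pderiv j (pderiv c q)))
      = ∑ j ∈ s, ∑ c ∈ s, C (lam (m + c)) * (X (n + j) * pderiv j (pderiv c q)) := by
    rw [Finset.sum_comm]
    refine Finset.sum_congr rfl fun x _ => Finset.sum_congr rfl fun y _ => ?_
    rw [pderiv_pderiv_comm y x q]
  have idL1 : (∑ c ∈ s, C (lam (m + (n + c))) * pderiv c q)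
      = ∑ c ∈ s, C (lam (n + m + c)) * pderiv c q :=
    Finset.sum_congr rfl fun c _ => by rw [show m + (n + c) = n + m + c by ring]
  have idP1 : (∑ a ∈ s, ∑ b ∈ s, X (n + (m + a + b)) * pderiv a (pderiv b q))
      = ∑ a ∈ s, ∑ b ∈ s, X (n + m + a + b) * pderiv a (pderiv b q) :=
    Finset.sum_congr rfl fun a _ => Finset.sum_congr rfl fun b _ => by
      rw [show n + (m + a + b) = n + m + a + b by ring]
  -- RHS
  rw [Pi.smul_apply, Eexp lam (n + m) q hs, hEm, idA1, idA2, idG3, idP3, idL1, idP1,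
    smul_eq_C_mul, map_ofNat (C : ℂ →+* RSpace) 2]
  ring
lemma rel_EE (lam : ℤ → ℂ) (n m : ℤ) : opComm (Eop lam n) (Eop lam m) = 0 := by
  funext q
  have hs : Gd q q.vars := gd_vars q
  set s : Finset ℤ := q.vars with hs_def
  set t : Finset ℤ := s ∪ (s ×ˢ s).image (fun p => m + p.1 + p.2)
      ∪ (s ×ˢ s).image (fun p => n + p.1 + p.2) with ht_def
  have h1 : s ⊆ t := by
    intro x hx
    simp only [ht_def, Finset.mem_union]
    exact Or.inl (Or.inl hx)
  have h2m : ∀ a ∈ s, ∀ b ∈ s, m + a + b ∈ t := by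
    intro a ha b hb
    simp only [ht_def, Finset.mem_union, Finset.mem_image]
    exact Or.inl (Or.inr ⟨(a, b), Finset.mem_product.2 ⟨ha, hb⟩, rfl⟩)
  have h2n : ∀ a ∈ s, ∀ b ∈ s, n + a + b ∈ t := by
    intro a ha b hb
    simp only [ht_def, Finset.mem_union, Finset.mem_image]
    exact Or.inr ⟨(a, b), Finset.mem_product.2 ⟨ha, hb⟩, rfl⟩
  have hEm : Eop lam m q
      = -(∑ a ∈ s, ∑ b ∈ s, X (m + a + b) * pderiv a (pderiv b q))
        - ∑ c ∈ s, C (lam (m + c)) * pderiv c q := Eexp lam m q hs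
  have hEn : Eop lam n q
      = -(∑ a ∈ s, ∑ b ∈ s, X (n + a + b) * pderiv a (pderiv b q))
        - ∑ c ∈ s, C (lam (n + c)) * pderiv c q := Eexp lam n q hs
  have hGEm : Gd (Eop lam m q) t := by
    rw [hEm]; exact ((gd_Ssum hs m h1 h2m).neg).sub (gd_Lsum hs _ h1)
  have hGEn : Gd (Eop lam n q) t := by
    rw [hEn]; exact ((gd_Ssum hs n h1 h2n).neg).sub (gd_Lsum hs _ h1)
  have c1 : Eop lam n (Eop lam m q)
      = -(∑ a ∈ t, ∑ b ∈ t, X (n + a + b) * pderiv a (pderiv b (Eop lam m q)))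
        - ∑ j ∈ t, C (lam (n + j)) * pderiv j (Eop lam m q) := Eexp lam n _ hGEm
  have c2 : Eop lam m (Eop lam n q)
      = -(∑ a ∈ t, ∑ b ∈ t, X (m + a + b) * pderiv a (pderiv b (Eop lam n q)))
        - ∑ j ∈ t, C (lam (m + j)) * pderiv j (Eop lam n q) := Eexp lam m _ hGEn
  have hSnm : (∑ a ∈ t, ∑ b ∈ t, X (n + a + b) * pderiv a (pderiv b (Eop lam m q)))
      = -(∑ a ∈ t, ∑ b ∈ t, X (n + a + b) * pderiv a (pderiv b
            (∑ u ∈ s, ∑ v ∈ s, X (m + u + v) * pderiv u (pderiv v q))))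
        - ∑ a ∈ t, ∑ b ∈ t, X (n + a + b) * pderiv a (pderiv b
            (∑ c ∈ s, C (lam (m + c)) * pderiv c q)) := by
    have step : ∀ a ∈ t, ∀ b ∈ t,
        X (n + a + b) * pderiv a (pderiv b (Eop lam m q))
          = -(X (n + a + b) * pderiv a (pderiv b
                (∑ u ∈ s, ∑ v ∈ s, X (m + u + v) * pderiv u (pderiv v q))))
            - X (n + a + b) * pderiv a (pderiv b
                (∑ c ∈ s, C (lam (m + c)) * pderiv c q)) := by
      intro a _ b _
      rw [hEm]
      simp only [map_sub, map_neg]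
      ring
    rw [Finset.sum_congr rfl (fun a ha => Finset.sum_congr rfl (step a ha))]
    simp only [Finset.sum_sub_distrib, Finset.sum_neg_distrib]
  have hSmn : (∑ a ∈ t, ∑ b ∈ t, X (m + a + b) * pderiv a (pderiv b (Eop lam n q)))
      = -(∑ a ∈ t, ∑ b ∈ t, X (m + a + b) * pderiv a (pderiv b
            (∑ u ∈ s, ∑ v ∈ s, X (n + u + v) * pderiv u (pderiv v q))))
        - ∑ a ∈ t, ∑ b ∈ t, X (m + a + b) * pderiv a (pderiv b
            (∑ c ∈ s, C (lam (n + c)) * pderiv c q)) := by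
    have step : ∀ a ∈ t, ∀ b ∈ t,
        X (m + a + b) * pderiv a (pderiv b (Eop lam n q))
          = -(X (m + a + b) * pderiv a (pderiv b
                (∑ u ∈ s, ∑ v ∈ s, X (n + u + v) * pderiv u (pderiv v q))))
            - X (m + a + b) * pderiv a (pderiv b
                (∑ c ∈ s, C (lam (n + c)) * pderiv c q)) := by
      intro a _ b _
      rw [hEn]
      simp only [map_sub, map_neg]
      ring
    rw [Finset.sum_congr rfl (fun a ha => Finset.sum_congr rfl (step a ha))]
    simp only [Finset.sum_sub_distrib, Finset.sum_neg_distrib]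
  have hLnm : (∑ j ∈ t, C (lam (n + j)) * pderiv j (Eop lam m q))
      = -(∑ j ∈ t, C (lam (n + j)) * pderiv j
            (∑ u ∈ s, ∑ v ∈ s, X (m + u + v) * pderiv u (pderiv v q)))
        - ∑ j ∈ t, C (lam (n + j)) * pderiv j (∑ c ∈ s, C (lam (m + c)) * pderiv c q) := by
    have step : ∀ j ∈ t,
        C (lam (n + j)) * pderiv j (Eop lam m q)
          = -(C (lam (n + j)) * pderiv j
                (∑ u ∈ s, ∑ v ∈ s, X (m + u + v) * pderiv u (pderiv v q)))
            - C (lam (n + j)) * pderiv j (∑ c ∈ s, C (lam (m + c)) * pderiv c q) := by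
      intro j _
      rw [hEm]
      simp only [map_sub, map_neg]
      ring
    rw [Finset.sum_congr rfl step]
    simp only [Finset.sum_sub_distrib, Finset.sum_neg_distrib]
  have hLmn : (∑ j ∈ t, C (lam (m + j)) * pderiv j (Eop lam n q))
      = -(∑ j ∈ t, C (lam (m + j)) * pderiv j
            (∑ u ∈ s, ∑ v ∈ s, X (n + u + v) * pderiv u (pderiv v q)))
        - ∑ j ∈ t, C (lam (m + j)) * pderiv j (∑ c ∈ s, C (lam (n + c)) * pderiv c q) := by
    have step : ∀ j ∈ t,
        C (lam (m + j)) * pderiv j (Eop lam n q)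
          = -(C (lam (m + j)) * pderiv j
                (∑ u ∈ s, ∑ v ∈ s, X (n + u + v) * pderiv u (pderiv v q)))
            - C (lam (m + j)) * pderiv j (∑ c ∈ s, C (lam (n + c)) * pderiv c q) := by
      intro j _
      rw [hEn]
      simp only [map_sub, map_neg]
      ring
    rw [Finset.sum_congr rfl step]
    simp only [Finset.sum_sub_distrib, Finset.sum_neg_distrib]
  simp only [opComm, Pi.zero_apply]
  rw [c1, c2, hSnm, hSmn, hLnm, hLmn,
    S_of_S n m q hs h1 h2m, S_of_S m n q hs h1 h2n,
    S_of_L lam n m q hs h1, S_of_L lam m n q hs h1,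
    L_of_S lam n m q hs h1 h2m, L_of_S lam m n q hs h1 h2n,
    L_of_L lam n m q hs h1, L_of_L lam m n q hs h1]
  -- symmetric identities
  have iB1 : (∑ a ∈ s, ∑ u ∈ s, ∑ v ∈ s,
        X (m + a + (n + u + v)) * pderiv a (pderiv u (pderiv v q)))
      = ∑ b ∈ s, ∑ u ∈ s, ∑ v ∈ s,
          X (n + (m + u + v) + b) * pderiv b (pderiv u (pderiv v q)) :=
    Finset.sum_congr rfl fun a _ => Finset.sum_congr rfl fun u _ =>
      Finset.sum_congr rfl fun v _ => by
        rw [show m + a + (n + u + v) = n + (m + u + v) + a by ring]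
  have iB2 : (∑ b ∈ s, ∑ u ∈ s, ∑ v ∈ s,
        X (m + (n + u + v) + b) * pderiv b (pderiv u (pderiv v q)))
      = ∑ a ∈ s, ∑ u ∈ s, ∑ v ∈ s,
          X (n + a + (m + u + v)) * pderiv a (pderiv u (pderiv v q)) :=
    Finset.sum_congr rfl fun a _ => Finset.sum_congr rfl fun u _ =>
      Finset.sum_congr rfl fun v _ => by
        rw [show m + (n + u + v) + a = n + a + (m + u + v) by ring]
  have iB3 : (∑ a ∈ s, ∑ b ∈ s, ∑ u ∈ s, ∑ v ∈ s,
        X (m + a + b) * X (n + u + v)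
          * pderiv a (pderiv b (pderiv u (pderiv v q))))
      = ∑ a ∈ s, ∑ b ∈ s, ∑ u ∈ s, ∑ v ∈ s,
          X (n + a + b) * X (m + u + v)
            * pderiv a (pderiv b (pderiv u (pderiv v q))) := by
    rw [Finset.sum_congr rfl (fun a _ => Finset.sum_comm), Finset.sum_comm]
    rw [Finset.sum_congr rfl (fun u _ => Finset.sum_congr rfl (fun a _ => Finset.sum_comm))]
    rw [Finset.sum_congr rfl (fun u _ => Finset.sum_comm)]
    refine Finset.sum_congr rfl fun u _ => Finset.sum_congr rfl fun v _ =>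
      Finset.sum_congr rfl fun a _ => Finset.sum_congr rfl fun b _ => ?_
    rw [pderiv_d2_d2 u v a b q]
    ring
  have iSL : (∑ a ∈ s, ∑ b ∈ s, ∑ c ∈ s,
        C (lam (n + c)) * (X (m + a + b) * pderiv a (pderiv b (pderiv c q))))
      = ∑ j ∈ s, ∑ a ∈ s, ∑ b ∈ s,
          C (lam (n + j)) * X (m + a + b) * pderiv j (pderiv a (pderiv b q)) := by
    rw [Finset.sum_congr rfl (fun a _ => Finset.sum_comm), Finset.sum_comm]
    refine Finset.sum_congr rfl fun c _ => Finset.sum_congr rfl fun a _ =>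
      Finset.sum_congr rfl fun b _ => ?_
    rw [← pderiv_comm_d2 c a b q]
    ring
  have iSL' : (∑ a ∈ s, ∑ b ∈ s, ∑ c ∈ s,
        C (lam (m + c)) * (X (n + a + b) * pderiv a (pderiv b (pderiv c q))))
      = ∑ j ∈ s, ∑ a ∈ s, ∑ b ∈ s,
          C (lam (m + j)) * X (n + a + b) * pderiv j (pderiv a (pderiv b q)) := by
    rw [Finset.sum_congr rfl (fun a _ => Finset.sum_comm), Finset.sum_comm]
    refine Finset.sum_congr rfl fun c _ => Finset.sum_congr rfl fun a _ =>
      Finset.sum_congr rfl fun b _ => ?_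
    rw [← pderiv_comm_d2 c a b q]
    ring
  have iLS1 : (∑ a ∈ s, ∑ b ∈ s, C (lam (m + (n + a + b))) * pderiv a (pderiv b q))
      = ∑ a ∈ s, ∑ b ∈ s, C (lam (n + (m + a + b))) * pderiv a (pderiv b q) :=
    Finset.sum_congr rfl fun a _ => Finset.sum_congr rfl fun b _ => by
      rw [show m + (n + a + b) = n + (m + a + b) by ring]
  have iLL : (∑ j ∈ s, ∑ c ∈ s,
        C (lam (m + j)) * C (lam (n + c)) * pderiv j (pderiv c q))
      = ∑ j ∈ s, ∑ c ∈ s,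
          C (lam (n + j)) * C (lam (m + c)) * pderiv j (pderiv c q) := by
    rw [Finset.sum_comm]
    refine Finset.sum_congr rfl fun x _ => Finset.sum_congr rfl fun y _ => ?_
    rw [pderiv_pderiv_comm y x q]
    ring
  rw [iB1, iB2, iB3, iSL, iSL', iLS1, iLL]
  ring


/-- the operators `E_n, H_n, F_n` satisfy the commutation relations of
the loop algebra `sl(2,ℂ) ⊗ ℂ[t,t⁻¹]`: `[H_n,H_m] = 0`, `[H_n,E_m] = 2E_{n+m}`,
`[H_n,F_m] = −2F_{n+m}`, `[E_n,F_m] = H_{n+m}`, `[E_n,E_m] = [F_n,F_m] = 0`;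
i.e. they define a representation of the loop algebra (central element acting by 0). -/
theorem loop_sl2_relations (lam : ℤ → ℂ) (n m : ℤ) :
    opComm (Hop lam n) (Hop lam m) = 0 ∧
    opComm (Hop lam n) (Eop lam m) = (2 : ℂ) • Eop lam (n + m) ∧
    opComm (Hop lam n) (Fop m) = (-2 : ℂ) • Fop (n + m) ∧
    opComm (Eop lam n) (Fop m) = Hop lam (n + m) ∧
    opComm (Eop lam n) (Eop lam m) = 0 ∧
    opComm (Fop n) (Fop m) = 0 :=
  ⟨rel_HH lam n m, rel_HE lam n m, rel_HF lam n m, rel_EF lam n m,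
    rel_EE lam n m, rel_FF n m⟩
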